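/- Suppose 0 lies in the convex hull of vectors A_{j_1}, ..., A_{j_{p+1}} in ℝ^p, and suppose that 0 does not lie in the convex hull of any p of these vectors. Then the matrix with columns (A_{j_1},1), ..., (A_{j_{p+1}},1) in ℝ^{p+1} has rank p+1. -/

import Mathlib

open Set

/-- Key lemma: columns are linearly independent. -/
theorem statement1_aux {p : ℕ} (v : Fin (p + 1) → (Fin p → ℝ))
    (h0 : (0 : Fin p → ℝ) ∈ convexHull ℝ (Set.range v))
    (h1 : ∀ s : Finset (Fin (p + 1)), s.card = p →
      (0 : Fin p → ℝ) ∉ convexHull ℝ (v '' ↑s)) :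
    LinearIndependent ℝ (fun k : Fin (p + 1) =>
      (Fin.snoc (v k) (1 : ℝ) : Fin (p + 1) → ℝ)) := by
  -- extract convex weights
  rw [convexHull_range_eq_exists_affineCombination] at h0
  obtain ⟨s, w, hw0, hw1, hwv⟩ := h0
  set W : Fin (p + 1) → ℝ := fun i => if i ∈ s then w i else 0 with hW
  have hW0 : ∀ i, 0 ≤ W i := by
    intro i
    simp only [hW]
    split
    · exact hw0 i ‹_›
    · exact le_rfl
  have hWsum : ∑ i, W i = 1 := by
    rw [hW]
    rw [Finset.sum_ite_mem, Finset.univ_inter]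
    exact hw1
  have hWv : ∑ i, W i • v i = 0 := by
    rw [hW]
    have : ∑ i, (if i ∈ s then w i else 0) • v i
        = ∑ i ∈ s, w i • v i := by
      simp [ite_smul, Finset.sum_ite_mem]
    rw [this, ← s.affineCombination_eq_linear_combination v w hw1, hwv]
  rw [Fintype.linearIndependent_iff]
  intro c hc
  by_contra hne
  push_neg at hne
  obtain ⟨k1, hk1⟩ := hne
  -- evaluate the relation at coordinates
  have hcsum : ∑ k, c k = 0 := by
    have := congrFun hc (Fin.last p)
    simpa [Finset.sum_apply, Fin.snoc_last] using this
  have hcv : ∑ k, c k • v k = 0 := by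
    funext i
    have := congrFun hc (Fin.castSucc i)
    simpa [Finset.sum_apply, Fin.snoc_castSucc] using this
  -- there is a positive coefficient
  set S : Finset (Fin (p + 1)) := Finset.univ.filter (fun k => 0 < c k) with hS
  have hSne : S.Nonempty := by
    by_contra hSe
    rw [Finset.not_nonempty_iff_eq_empty] at hSe
    have hall : ∀ k ∈ Finset.univ, c k ≤ 0 := by
      intro k _
      by_contra h
      push_neg at h
      have : k ∈ S := by simp [hS, h]
      simp [hSe] at this
    have := (Finset.sum_eq_zero_iff_of_nonpos hall).mp hcsum k1 (Finset.mem_univ _)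
    exact hk1 this
  obtain ⟨k0, hk0S, hk0min⟩ := S.exists_min_image (fun k => W k / c k) hSne
  have hck0 : 0 < c k0 := by simpa [hS] using hk0S
  set t : ℝ := W k0 / c k0 with ht
  have ht0 : 0 ≤ t := div_nonneg (hW0 k0) hck0.le
  set u : Fin (p + 1) → ℝ := fun k => W k - t * c k with hu
  have hu0 : ∀ k, 0 ≤ u k := by
    intro k
    rcases le_or_gt (c k) 0 with h | h
    · have : t * c k ≤ 0 := mul_nonpos_of_nonneg_of_nonpos ht0 h
      simp only [hu]
      linarith [hW0 k]
    · have hkS : k ∈ S := by simp [hS, h]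
      have := hk0min k hkS
      rw [div_le_div_iff₀ hck0 h] at this
      have h2 : t * c k ≤ W k := by
        rw [ht, div_mul_eq_mul_div, div_le_iff₀ hck0]
        linarith
      simp only [hu]; linarith
  have husum : ∑ k, u k = 1 := by
    simp only [hu, Finset.sum_sub_distrib, ← Finset.mul_sum, hWsum, hcsum]
    ring
  have huv : ∑ k, u k • v k = 0 := by
    have : ∑ k, u k • v k = (∑ k, W k • v k) - t • (∑ k, c k • v k) := by
      rw [Finset.smul_sum, ← Finset.sum_sub_distrib]
      refine Finset.sum_congr rfl (fun k _ => ?_)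
      simp only [hu, sub_smul, smul_smul]
    rw [this, hWv, hcv, smul_zero, sub_zero]
  have huk0 : u k0 = 0 := by
    simp only [hu, ht]
    field_simp
    ring
  -- restrict to the erased set
  set s' : Finset (Fin (p + 1)) := Finset.univ.erase k0 with hs'
  have hcard : s'.card = p := by
    rw [hs', Finset.card_erase_of_mem (Finset.mem_univ _), Finset.card_univ,
      Fintype.card_fin]
    rfl
  refine h1 s' hcard ?_
  have hsum' : ∑ k ∈ s', u k = 1 := by
    have h2 := Finset.add_sum_erase Finset.univ u (Finset.mem_univ k0)
    rw [huk0, zero_add, husum] at h2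
    exact h2
  have hv' : ∑ k ∈ s', u k • v k = 0 := by
    have h2 := Finset.add_sum_erase Finset.univ (fun k => u k • v k) (Finset.mem_univ k0)
    simp only [huk0, zero_smul, zero_add, huv] at h2
    exact h2
  have := s'.centerMass_mem_convexHull (w := u) (z := v)
    (fun k _ => hu0 k) (by rw [hsum']; norm_num)
    (fun k hk => Set.mem_image_of_mem v hk)
  rwa [Finset.centerMass_eq_of_sum_1 _ _ hsum', hv'] at this

/-- if `0` is in the convex hull of `p+1` vectors of `ℝ^p` but not in
the convex hull of any `p` of them, then the matrix whose columns are the vectors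
`(A_{j_k}, 1) ∈ ℝ^{p+1}` has rank `p+1`. -/
theorem statement1 {p : ℕ} (v : Fin (p + 1) → (Fin p → ℝ))
    (h0 : (0 : Fin p → ℝ) ∈ convexHull ℝ (Set.range v))
    (h1 : ∀ s : Finset (Fin (p + 1)), s.card = p →
      (0 : Fin p → ℝ) ∉ convexHull ℝ (v '' ↑s)) :
    Matrix.rank (Matrix.of fun (j : Fin (p + 1)) (k : Fin (p + 1)) =>
      (Fin.snoc (v k) (1 : ℝ) : Fin (p + 1) → ℝ) j) = p + 1 := by
  rw [Matrix.rank_eq_finrank_span_cols]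
  have hli := statement1_aux v h0 h1
  have : Matrix.col (Matrix.of fun (j : Fin (p + 1)) (k : Fin (p + 1)) =>
      (Fin.snoc (v k) (1 : ℝ) : Fin (p + 1) → ℝ) j)
      = fun k => (Fin.snoc (v k) (1 : ℝ) : Fin (p + 1) → ℝ) := rfl
  rw [this, finrank_span_eq_card hli, Fintype.card_fin]
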